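/- Let p be a prime, B an integral domain of characteristic zero with fraction field F, and let Γ ⊆ F[X] be the B-subalgebra of the polynomial ring F[X] consisting of all polynomials of the form Σ_i b_i · X^i/i! with b_i ∈ B (the divided power polynomial algebra B⟨X⟩). Let ξ ∈ B be a nonzero element such that the principal ideal (ξ) is a prime ideal of B and p ∉ (ξ). Then for every n ∈ ℕ and every f ∈ Γ, if (ξ − X) · f ∈ p^n · Γ then f ∈ p^n · Γ. Consequently, the quotient ring Γ/(ξ − X)Γ is p-torsion free: any element of the quotient annihilated by p is zero. -/

import Mathlib

open Polynomial

/-- The divided power polynomial algebra `B⟨X⟩`, realized as the `B`-subalgebra of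
`F[X]` (`F` the fraction field of `B`) consisting of all polynomials of the form
`Σ_i b_i · X ^ i / i !` with `b_i ∈ B`, i.e. those `f` with `i ! * f.coeff i` in the
image of `B` for all `i`. -/
def dpSubring (B : Type*) [CommRing B] [IsDomain B] [CharZero B] :
    Subring (Polynomial (FractionRing B)) where
  carrier := { f | ∀ i : ℕ, ∃ b : B,
    (i.factorial : FractionRing B) * f.coeff i = algebraMap B (FractionRing B) b }
  zero_mem' := fun i => ⟨0, by simp⟩
  one_mem' := fun i => by
    refine ⟨if i = 0 then 1 else 0, ?_⟩
    rcases eq_or_ne i 0 with h | h <;> simp [Polynomial.coeff_one, h]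
  add_mem' := by
    intro f g hf hg i
    obtain ⟨a, ha⟩ := hf i
    obtain ⟨b, hb⟩ := hg i
    exact ⟨a + b, by rw [Polynomial.coeff_add, mul_add, ha, hb, map_add]⟩
  neg_mem' := by
    intro f hf i
    obtain ⟨a, ha⟩ := hf i
    exact ⟨-a, by rw [Polynomial.coeff_neg, mul_neg, ha, map_neg]⟩
  mul_mem' := by
    intro f g hf hg
    simp only [Set.mem_setOf_eq] at hf hg ⊢
    intro i
    choose a ha using hf
    choose b hb using hg
    refine ⟨∑ jk ∈ Finset.HasAntidiagonal.antidiagonal i, (i.choose jk.1 : B) * (a jk.1 * b jk.2), ?_⟩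
    rw [Polynomial.coeff_mul, Finset.mul_sum, map_sum]
    refine Finset.sum_congr rfl fun jk hjk => ?_
    obtain ⟨j, k⟩ := jk
    rw [Finset.HasAntidiagonal.mem_antidiagonal] at hjk
    have hfac : (i.factorial : FractionRing B) =
        (i.choose j : FractionRing B) *
          ((j.factorial : FractionRing B) * (k.factorial : FractionRing B)) := by
      subst hjk
      have hsymm : (j + k).choose j = (j + k).choose k := by
        have := Nat.choose_symm (Nat.le_add_right j k)
        simpa [Nat.add_sub_cancel_left] using this.symm
      rw_mod_cast [← Nat.add_choose_mul_factorial_mul_factorial j k]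
      rw [hsymm]
      ring
    calc (i.factorial : FractionRing B) * (f.coeff j * g.coeff k)
        = (i.choose j : FractionRing B) *
          (((j.factorial : FractionRing B) * f.coeff j) *
            ((k.factorial : FractionRing B) * g.coeff k)) := by rw [hfac]; ring
      _ = algebraMap B (FractionRing B) ((i.choose j : B) * (a j * b k)) := by
          rw [ha, hb]
          push_cast [map_mul, map_natCast]
          ring

/-- The element `ξ − X` of `B⟨X⟩`. -/
theorem xi_sub_X_mem_dpSubring (B : Type*) [CommRing B] [IsDomain B] [CharZero B] (ξ : B) :
    Polynomial.C (algebraMap B (FractionRing B) ξ) - Polynomial.X ∈ dpSubring B := by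
  intro i
  match i with
  | 0 => exact ⟨ξ, by simp⟩
  | 1 => exact ⟨-1, by simp⟩
  | (i + 2) => exact ⟨0, by simp [Polynomial.coeff_X, Polynomial.coeff_C]⟩

section Helpers

variable {p : ℕ} {B : Type*} [CommRing B] [IsDomain B] [CharZero B]

omit [CharZero B] in
lemma key_dvd {ξ : B} (hξ0 : ξ ≠ 0) (hξprime : (Ideal.span {ξ} : Ideal B).IsPrime)
    (hpξ : (p : B) ∉ Ideal.span {ξ}) (n : ℕ) {x m : B}
    (h : ξ * x = (p : B) ^ n * m) : (p : B) ^ n ∣ x := by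
  have hpn : ((p : B) ^ n) ∉ Ideal.span {ξ} := fun hmem =>
    hpξ (hξprime.mem_of_pow_mem n hmem)
  have hm : m ∈ Ideal.span {ξ} := by
    have hmem : (p : B) ^ n * m ∈ Ideal.span {ξ} := by
      rw [← h]
      exact Ideal.mul_mem_right _ _ (Ideal.subset_span rfl)
    rcases hξprime.mem_or_mem hmem with h1 | h2
    · exact absurd h1 hpn
    · exact h2
  obtain ⟨m', hm'⟩ := Ideal.mem_span_singleton'.mp hm
  refine ⟨m', mul_left_cancel₀ hξ0 ?_⟩
  rw [h, ← hm']; ring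

lemma main_div {ξ : B} (hξ0 : ξ ≠ 0) (hξprime : (Ideal.span {ξ} : Ideal B).IsPrime)
    (hpξ : (p : B) ∉ Ideal.span {ξ}) (n : ℕ) {f g : Polynomial (FractionRing B)}
    (hf : f ∈ dpSubring B) (hg : g ∈ dpSubring B)
    (heq : (Polynomial.C (algebraMap B (FractionRing B) ξ) - Polynomial.X) * f
      = (p : Polynomial (FractionRing B)) ^ n * g) :
    ∃ h ∈ dpSubring B, f = (p : Polynomial (FractionRing B)) ^ n * h := by
  set F := FractionRing B
  have inj : Function.Injective (algebraMap B F) := IsFractionRing.injective B F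
  choose a ha using hf
  choose c hc using hg
  have hpB : (p : B) ≠ 0 := fun h => hpξ (by rw [h]; exact Ideal.zero_mem _)
  have hpF1 : (p : F) ≠ 0 := by
    rw [← map_natCast (algebraMap B F)]
    exact fun h => hpB (inj (by rw [h, map_zero]))
  have hpF : ((p : F) ^ n) ≠ 0 := pow_ne_zero _ hpF1
  have hCp : (p : Polynomial F) ^ n = Polynomial.C ((p : F) ^ n) := by
    rw [map_pow, Polynomial.C_eq_natCast]
  rw [hCp] at heq
  -- coefficient equations in F
  have h0 : algebraMap B F ξ * f.coeff 0 = (p : F) ^ n * g.coeff 0 := by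
    have h' := congrArg (fun q => Polynomial.coeff q 0) heq
    simp only [sub_mul, Polynomial.coeff_sub, Polynomial.coeff_C_mul,
      Polynomial.mul_coeff_zero, Polynomial.coeff_X_zero, zero_mul, sub_zero,
      Polynomial.coeff_C_zero] at h'
    exact h'
  have hS : ∀ i : ℕ, algebraMap B F ξ * f.coeff (i + 1) - f.coeff i
      = (p : F) ^ n * g.coeff (i + 1) := by
    intro i
    have h' := congrArg (fun q => Polynomial.coeff q (i + 1)) heq
    simp only [sub_mul, Polynomial.coeff_sub, Polynomial.coeff_C_mul,
      Polynomial.coeff_X_mul] at h'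
    exact h'
  -- relations in B
  have hrel0 : ξ * a 0 = (p : B) ^ n * c 0 := by
    apply inj
    push_cast [map_mul]
    have ha0 := ha 0
    have hc0 := hc 0
    simp only [Nat.factorial_zero, Nat.cast_one, one_mul] at ha0 hc0
    rw [← ha0, ← hc0]
    exact h0
  have hrelS : ∀ i : ℕ, ξ * a (i + 1) = (p : B) ^ n * c (i + 1) + (i + 1) * a i := by
    intro i
    apply inj
    push_cast [map_mul, map_add]
    have e5 : ((i + 1).factorial : F) = ((i : F) + 1) * (i.factorial : F) := by
      rw [Nat.factorial_succ, Nat.cast_mul, Nat.cast_succ]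
    linear_combination (((i + 1).factorial : F)) * hS i
      - algebraMap B F ξ * ha (i + 1) + ((p : F) ^ n) * hc (i + 1)
      + ((i : F) + 1) * ha i + (f.coeff i) * e5
  -- induction: p^n divides every a i
  have hdvd : ∀ i, (p : B) ^ n ∣ a i := by
    intro i
    induction i with
    | zero => exact key_dvd hξ0 hξprime hpξ n hrel0
    | succ i ih =>
        obtain ⟨d, hd⟩ := ih
        refine key_dvd hξ0 hξprime hpξ n (m := c (i + 1) + (i + 1) * d) ?_
        rw [hrelS i, hd]; ring
  choose d hd using hdvd
  refine ⟨Polynomial.C (((p : F) ^ n)⁻¹) * f, fun i => ⟨d i, ?_⟩, ?_⟩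
  · have hAd : algebraMap B F (a i) = (p : F) ^ n * algebraMap B F (d i) := by
      rw [hd i]; push_cast [map_mul]; ring
    have hcomm : (i.factorial : F) * (((p : F) ^ n)⁻¹ * f.coeff i)
        = ((p : F) ^ n)⁻¹ * ((i.factorial : F) * f.coeff i) := by ring
    rw [Polynomial.coeff_C_mul, hcomm, ha i, hAd, inv_mul_cancel_left₀ hpF]
  · rw [hCp, ← mul_assoc, ← Polynomial.C_mul, mul_inv_cancel₀ hpF, Polynomial.C_1, one_mul]

end Helpers

set_option maxHeartbeats 1000000 in
set_option synthInstance.maxHeartbeats 400000 in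
/-- Let `p` be a prime, `B` an integral domain of characteristic zero
with fraction field `F`, and `Γ = B⟨X⟩ ⊆ F[X]` the divided power polynomial algebra.
Let `ξ ∈ B` be nonzero such that `(ξ)` is a prime ideal of `B` and `p ∉ (ξ)`.  Then for
every `n` and every `f ∈ Γ`, if `(ξ − X) · f ∈ p ^ n · Γ` then `f ∈ p ^ n · Γ`;
consequently the quotient `Γ/(ξ − X)Γ` is `p`-torsion free. -/
theorem statement14 (p : ℕ) (hp : p.Prime) (B : Type*) [CommRing B] [IsDomain B]
    [CharZero B] (ξ : B) (hξ0 : ξ ≠ 0) (hξprime : (Ideal.span {ξ} : Ideal B).IsPrime)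
    (hpξ : (p : B) ∉ Ideal.span {ξ}) :
    (∀ (n : ℕ) (f : dpSubring B),
      (p : dpSubring B) ^ n ∣
          (⟨Polynomial.C (algebraMap B (FractionRing B) ξ) - Polynomial.X,
            xi_sub_X_mem_dpSubring B ξ⟩ : dpSubring B) * f →
        (p : dpSubring B) ^ n ∣ f) ∧
    ∀ y : (dpSubring B) ⧸ (Ideal.span
        {(⟨Polynomial.C (algebraMap B (FractionRing B) ξ) - Polynomial.X,
            xi_sub_X_mem_dpSubring B ξ⟩ : dpSubring B)}),
      (p : (dpSubring B) ⧸ (Ideal.span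
        {(⟨Polynomial.C (algebraMap B (FractionRing B) ξ) - Polynomial.X,
            xi_sub_X_mem_dpSubring B ξ⟩ : dpSubring B)})) * y = 0 → y = 0 := by
  have inj : Function.Injective (algebraMap B (FractionRing B)) :=
    IsFractionRing.injective B (FractionRing B)
  have hpB : (p : B) ≠ 0 := fun h => hpξ (by rw [h]; exact Ideal.zero_mem _)
  have hpF : (p : FractionRing B) ≠ 0 := by
    rw [← map_natCast (algebraMap B (FractionRing B))]
    exact fun h => hpB (inj (by rw [h, map_zero]))
  have hpΓ : (p : dpSubring B) ≠ 0 := by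
    intro h
    have h1 := congrArg Subtype.val h
    push_cast at h1
    exact hpF (by simpa using congrArg (fun q => Polynomial.coeff q 0) h1)
  have part1 : ∀ (n : ℕ) (f : dpSubring B),
      (p : dpSubring B) ^ n ∣
          (⟨Polynomial.C (algebraMap B (FractionRing B) ξ) - Polynomial.X,
            xi_sub_X_mem_dpSubring B ξ⟩ : dpSubring B) * f →
        (p : dpSubring B) ^ n ∣ f := by
    intro n f hdvd
    obtain ⟨g, hg⟩ := hdvd
    have hval := congrArg Subtype.val hg
    push_cast at hval
    obtain ⟨h, hmem, heq⟩ := main_div hξ0 hξprime hpξ n f.2 g.2 hval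
    exact ⟨⟨h, hmem⟩, Subtype.ext (by push_cast; exact heq)⟩
  refine ⟨part1, ?_⟩
  intro y hy
  obtain ⟨f, rfl⟩ := Ideal.Quotient.mk_surjective y
  have hy' : Ideal.Quotient.mk (Ideal.span
      {(⟨Polynomial.C (algebraMap B (FractionRing B) ξ) - Polynomial.X,
        xi_sub_X_mem_dpSubring B ξ⟩ : dpSubring B)}) ((p : dpSubring B) * f) = 0 := by
    rw [RingHom.map_mul, map_natCast]; exact hy
  obtain ⟨g, hg⟩ := Ideal.mem_span_singleton.mp (Ideal.Quotient.eq_zero_iff_mem.mp hy')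
  have h1 : (p : dpSubring B) ^ 1 ∣
      (⟨Polynomial.C (algebraMap B (FractionRing B) ξ) - Polynomial.X,
        xi_sub_X_mem_dpSubring B ξ⟩ : dpSubring B) * g :=
    ⟨f, by rw [pow_one]; exact hg.symm⟩
  obtain ⟨g', hg'⟩ := part1 1 g h1
  have hfd : f = (⟨Polynomial.C (algebraMap B (FractionRing B) ξ) - Polynomial.X,
      xi_sub_X_mem_dpSubring B ξ⟩ : dpSubring B) * g' := by
    apply mul_left_cancel₀ hpΓ
    rw [hg, hg', pow_one]; ring
  exact Ideal.Quotient.eq_zero_iff_mem.mpr (Ideal.mem_span_singleton.mpr ⟨g', hfd⟩)
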